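/- Let f_1, …, f_n : ℝ^d → ℝ be differentiable with F(w) = (1/n)·Σ_{i=1}^n f_i(w) convex and minimized at w*. Fix w_t ∈ ℝ^d, z ∈ ℝ^d, η ≥ 0, δ > 0, positive integer b, and set u = w_t + z, z* = w* − w_t. Suppose every coordinate of z* lies in D_{δ,b} = {δ·k : k ∈ ℤ, −2^{b−1} ≤ k ≤ 2^{b−1}−1}, and suppose (1/n)·Σ_{i=1}^n ‖∇f_i(u)‖² ≤ G². For each i let ẑ_i = z − η∇f_i(u), and quantize each coordinate of ẑ_i independently with the stochastic uniform quantizer Q_{δ,b}. Then (1/n)·Σ_{i=1}^n Σ_{j=1}^d E[(Q_{δ,b}((ẑ_i)_j) − (z*)_j)²] ≤ ‖u − w*‖² − 2η·(F(u) − F(w*)) + η²·G² + d·δ²/4. -/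

import Mathlib

/-- The expectation `E[g(Q_{δ,b}(v'))]` of a function `g` of the stochastic uniform
quantizer `Q_{δ,b}` applied to `v'`: inputs at or above `δ(2^{b-1}-1)` are clipped to
`δ(2^{b-1}-1)`, inputs at or below `-δ·2^{b-1}` are clipped to `-δ·2^{b-1}`, and otherwise
the quantizer takes value `δ⌊v'/δ⌋` with probability `(δ⌈v'/δ⌉ - v')/δ` and value
`δ⌈v'/δ⌉` with probability `(v' - δ⌊v'/δ⌋)/δ`. -/
noncomputable def quantExp (δ : ℝ) (b : ℕ) (v' : ℝ) (g : ℝ → ℝ) : ℝ :=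
  if δ * (2 ^ (b - 1) - 1) ≤ v' then g (δ * (2 ^ (b - 1) - 1))
  else if v' ≤ -(δ * 2 ^ (b - 1)) then g (-(δ * 2 ^ (b - 1)))
  else (δ * (⌈v' / δ⌉ : ℝ) - v') / δ * g (δ * (⌊v' / δ⌋ : ℝ))
    + (v' - δ * (⌊v' / δ⌋ : ℝ)) / δ * g (δ * (⌈v' / δ⌉ : ℝ))

open scoped RealInnerProductSpace

lemma quant_bound {δ : ℝ} (hδ : 0 < δ) {b : ℕ} (a v' : ℝ)
    (ha : ∃ k : ℤ, -(2 ^ (b - 1) : ℤ) ≤ k ∧ k ≤ 2 ^ (b - 1) - 1 ∧ a = δ * (k : ℝ)) :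
    quantExp δ b v' (fun q => (q - a) ^ 2) ≤ (v' - a) ^ 2 + δ ^ 2 / 4 := by
  obtain ⟨k, hk1, hk2, hak⟩ := ha
  have hk2' : (k : ℝ) ≤ 2 ^ (b - 1) - 1 := by exact_mod_cast hk2
  have hk1' : -(2 ^ (b - 1) : ℝ) ≤ (k : ℝ) := by exact_mod_cast hk1
  have hka : a ≤ δ * (2 ^ (b - 1) - 1) := by
    rw [hak]; exact mul_le_mul_of_nonneg_left hk2' hδ.le
  have hka' : -(δ * 2 ^ (b - 1)) ≤ a := by
    rw [hak]; nlinarith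
  unfold quantExp
  split_ifs with h1 h2
  · nlinarith [mul_nonneg (sub_nonneg.2 h1) (sub_nonneg.2 hka), sq_nonneg δ]
  · nlinarith [mul_nonneg (sub_nonneg.2 hka') (sub_nonneg.2 h2), sq_nonneg δ]
  · have hfl : δ * (⌊v' / δ⌋ : ℝ) ≤ v' := by
      have h := Int.floor_le (v' / δ)
      calc δ * (⌊v' / δ⌋ : ℝ) ≤ δ * (v' / δ) := mul_le_mul_of_nonneg_left h hδ.le
        _ = v' := by field_simp
    have hcl : v' ≤ δ * (⌈v' / δ⌉ : ℝ) := by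
      have h := Int.le_ceil (v' / δ)
      calc v' = δ * (v' / δ) := by field_simp
        _ ≤ δ * (⌈v' / δ⌉ : ℝ) := mul_le_mul_of_nonneg_left h hδ.le
    have hcf : ⌈v' / δ⌉ ≤ ⌊v' / δ⌋ + 1 := Int.ceil_le_floor_add_one _
    have hfc : ⌊v' / δ⌋ ≤ ⌈v' / δ⌉ := Int.floor_le_ceil _
    have hcases : ⌈v' / δ⌉ = ⌊v' / δ⌋ ∨ ⌈v' / δ⌉ = ⌊v' / δ⌋ + 1 := by omega
    rcases hcases with h | h
    · rw [h] at hcl ⊢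
      have hv : v' = δ * (⌊v' / δ⌋ : ℝ) := le_antisymm hcl hfl
      rw [← hv]
      simp only [sub_self, zero_div, zero_mul, add_zero, mul_zero, zero_add]
      positivity
    · rw [h] at hcl ⊢
      push_cast at hcl ⊢
      rw [div_mul_eq_mul_div, div_mul_eq_mul_div, ← add_div, div_le_iff₀ hδ]
      nlinarith [mul_nonneg hδ.le (sq_nonneg (v' - δ * (⌊v' / δ⌋ : ℝ) - δ / 2))]

lemma convex_grad_ineq {E : Type*} [NormedAddCommGroup E] [NormedSpace ℝ E]
    {F : E → ℝ} (hconv : ConvexOn ℝ Set.univ F) (x y : E)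
    (hd : DifferentiableAt ℝ F x) :
    F x + fderiv ℝ F x (y - x) ≤ F y := by
  set v := y - x with hv
  set φ : ℝ → ℝ := fun t => F (x + t • v) with hφdef
  have hline : HasDerivAt (fun t : ℝ => x + t • v) v 0 := by
    simpa using ((hasDerivAt_id (0 : ℝ)).smul_const v).const_add x
  have hpt : HasFDerivAt F (fderiv ℝ F x) (x + (0 : ℝ) • v) := by
    simpa using hd.hasFDerivAt
  have hφ : HasDerivAt φ (fderiv ℝ F x v) 0 := hpt.comp_hasDerivAt (0 : ℝ) hline
  have hslope : ∀ t ∈ Set.Ioc (0 : ℝ) 1, slope φ 0 t ≤ F y - F x := by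
    intro t ht
    obtain ⟨ht0, ht1⟩ := ht
    have hpoint : x + t • v = (1 - t) • x + t • y := by
      rw [hv]; rw [smul_sub, sub_smul, one_smul]; abel
    have hcvx := hconv.2 (Set.mem_univ x) (Set.mem_univ y)
      (by linarith : (0:ℝ) ≤ 1 - t) ht0.le (by ring)
    have hφt : φ t ≤ (1 - t) * F x + t * F y := by
      rw [hφdef]; simp only; rw [hpoint]; simpa using hcvx
    have hφ0 : φ 0 = F x := by simp [hφdef]
    rw [slope_def_field]
    rw [hφ0]
    rw [sub_zero, div_le_iff₀ ht0]
    nlinarith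
  have hsub : Set.Ioi (0:ℝ) ⊆ {(0:ℝ)}ᶜ := fun t ht => ne_of_gt ht
  have hlim : Filter.Tendsto (slope φ 0) (nhdsWithin 0 (Set.Ioi 0))
      (nhds (fderiv ℝ F x v)) :=
    (hasDerivAt_iff_tendsto_slope.1 hφ).mono_left (nhdsWithin_mono _ hsub)
  have hev : ∀ᶠ t in nhdsWithin (0:ℝ) (Set.Ioi 0), slope φ 0 t ≤ F y - F x :=
    Filter.eventually_of_mem (Ioc_mem_nhdsGT_of_mem (Set.mem_Ico.2 ⟨le_refl 0, one_pos⟩)) hslope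
  have := le_of_tendsto hlim hev
  linarith

lemma normsq_eq {d : ℕ} (x : EuclideanSpace ℝ (Fin d)) : ‖x‖ ^ 2 = ∑ j, (x j) ^ 2 := by
  rw [← real_inner_self_eq_norm_sq, PiLp.inner_apply]
  simp [RCLike.inner_apply, sq]

/-- One-step inequality of the QESGD algorithm: with `u = w_t + z`, `z* = w* - w_t` whose
coordinates all lie in `D_{δ,b}`, averaged second-moment bound
`(1/n)Σ_i ‖∇f_i(u)‖² ≤ G²`, and quantized updates `ẑ_i = z - η∇f_i(u)` (each coordinate
quantized independently by `Q_{δ,b}`), we have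
`(1/n)Σ_i Σ_j E[(Q_{δ,b}((ẑ_i)_j) - (z*)_j)²]
  ≤ ‖u - w*‖² - 2η(F(u) - F(w*)) + η²G² + dδ²/4`. -/
theorem qesgd_one_step (d n : ℕ) (hn : 0 < n) (hd : 0 < d)
    (f : Fin n → EuclideanSpace ℝ (Fin d) → ℝ)
    (hf : ∀ i, Differentiable ℝ (f i))
    (F : EuclideanSpace ℝ (Fin d) → ℝ)
    (hF : F = fun w => (1 / (n : ℝ)) * ∑ i, f i w)
    (hconv : ConvexOn ℝ Set.univ F)
    (wstar : EuclideanSpace ℝ (Fin d)) (hmin : ∀ w, F wstar ≤ F w)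
    (wt z u : EuclideanSpace ℝ (Fin d)) (hu : u = wt + z)
    (η : ℝ) (hη : 0 ≤ η) (δ : ℝ) (hδ : 0 < δ) (b : ℕ) (hb : 1 ≤ b)
    (hzstar : ∀ j : Fin d, ∃ k : ℤ, -(2 ^ (b - 1) : ℤ) ≤ k ∧ k ≤ 2 ^ (b - 1) - 1 ∧
      (wstar - wt) j = δ * (k : ℝ))
    (G : ℝ) (hG : (1 / (n : ℝ)) * ∑ i, ‖gradient (f i) u‖ ^ 2 ≤ G ^ 2) :
    (1 / (n : ℝ)) * ∑ i, ∑ j : Fin d,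
        quantExp δ b ((z - η • gradient (f i) u) j)
          (fun q => (q - (wstar - wt) j) ^ 2)
      ≤ ‖u - wstar‖ ^ 2 - 2 * η * (F u - F wstar) + η ^ 2 * G ^ 2
        + d * δ ^ 2 / 4 := by
  have hn' : (n : ℝ) ≠ 0 := Nat.cast_ne_zero.2 hn.ne'
  set a : EuclideanSpace ℝ (Fin d) := u - wstar with ha
  set v : Fin n → EuclideanSpace ℝ (Fin d) := fun i => gradient (f i) u with hv
  -- per-i bound
  have hi : ∀ i : Fin n, ∑ j : Fin d,
      quantExp δ b ((z - η • v i) j) (fun q => (q - (wstar - wt) j) ^ 2)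
      ≤ ‖a - η • v i‖ ^ 2 + d * δ ^ 2 / 4 := by
    intro i
    have h1 : ∀ j : Fin d,
        quantExp δ b ((z - η • v i) j) (fun q => (q - (wstar - wt) j) ^ 2)
        ≤ ((z - η • v i) j - (wstar - wt) j) ^ 2 + δ ^ 2 / 4 :=
      fun j => quant_bound hδ _ _ (hzstar j)
    calc ∑ j : Fin d, quantExp δ b ((z - η • v i) j) (fun q => (q - (wstar - wt) j) ^ 2)
        ≤ ∑ j : Fin d, (((z - η • v i) j - (wstar - wt) j) ^ 2 + δ ^ 2 / 4) :=
          Finset.sum_le_sum fun j _ => h1 j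
      _ = ∑ j : Fin d, ((a - η • v i) j) ^ 2 + d * δ ^ 2 / 4 := by
          have hvec : z - η • v i - (wstar - wt) = a - η • v i := by rw [ha, hu]; abel
          rw [Finset.sum_add_distrib]
          congr 1
          · apply Finset.sum_congr rfl
            intro j _
            rw [← hvec]
            simp [PiLp.sub_apply]
          · rw [Finset.sum_const, Finset.card_univ, Fintype.card_fin, nsmul_eq_mul]
            ring
      _ = ‖a - η • v i‖ ^ 2 + d * δ ^ 2 / 4 := by rw [normsq_eq]
  -- expansion
  have hexp : ∀ i : Fin n, ‖a - η • v i‖ ^ 2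
      = ‖a‖ ^ 2 - 2 * η * ⟪v i, a⟫ + η ^ 2 * ‖v i‖ ^ 2 := by
    intro i
    have hns : ‖η • v i‖ ^ 2 = η ^ 2 * ‖v i‖ ^ 2 := by
      rw [norm_smul, mul_pow, Real.norm_eq_abs, sq_abs]
    rw [norm_sub_sq_real, hns, real_inner_smul_right, real_inner_comm]
    ring
  -- fderiv of F
  have hFdsum : HasFDerivAt (fun w => ∑ i, f i w)
      (∑ i, fderiv ℝ (f i) u) u :=
    HasFDerivAt.fun_sum fun i _ => ((hf i) u).hasFDerivAt
  have hFd : HasFDerivAt F ((1 / (n : ℝ)) • ∑ i, fderiv ℝ (f i) u) u := by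
    rw [hF]; exact hFdsum.const_mul _
  have hgrad : ∀ i : Fin n, fderiv ℝ (f i) u a = ⟪v i, a⟫ := by
    intro i
    have h := ((hf i) u).hasGradientAt
    rw [hasGradientAt_iff_hasFDerivAt] at h
    rw [h.fderiv]
    simp [InnerProductSpace.toDual_apply_apply, hv]
  have hFda : fderiv ℝ F u a = (1 / (n : ℝ)) * ∑ i, ⟪v i, a⟫ := by
    rw [hFd.fderiv]
    rw [ContinuousLinearMap.smul_apply, ContinuousLinearMap.sum_apply]
    rw [smul_eq_mul]
    congr 1
    exact Finset.sum_congr rfl fun i _ => hgrad i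
  -- convexity key
  have hkey : F u - F wstar ≤ (1 / (n : ℝ)) * ∑ i, ⟪v i, a⟫ := by
    have hB := convex_grad_ineq hconv u wstar hFd.differentiableAt
    have hneg : (fderiv ℝ F u) (wstar - u) = -((fderiv ℝ F u) a) := by
      rw [ha, ← map_neg]; congr 1; abel
    rw [hneg, hFda] at hB
    linarith
  -- assemble
  have hstep : (1 / (n : ℝ)) * ∑ i, ∑ j : Fin d,
      quantExp δ b ((z - η • v i) j) (fun q => (q - (wstar - wt) j) ^ 2)
      ≤ (1 / (n : ℝ)) * ∑ i, (‖a‖ ^ 2 - 2 * η * ⟪v i, a⟫ + η ^ 2 * ‖v i‖ ^ 2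
          + d * δ ^ 2 / 4) := by
    apply mul_le_mul_of_nonneg_left _ (by positivity)
    apply Finset.sum_le_sum
    intro i _
    calc ∑ j : Fin d, quantExp δ b ((z - η • v i) j) (fun q => (q - (wstar - wt) j) ^ 2)
        ≤ ‖a - η • v i‖ ^ 2 + d * δ ^ 2 / 4 := hi i
      _ = ‖a‖ ^ 2 - 2 * η * ⟪v i, a⟫ + η ^ 2 * ‖v i‖ ^ 2 + d * δ ^ 2 / 4 := by
          rw [hexp i]
  have hdistrib : (1 / (n : ℝ)) * ∑ i, (‖a‖ ^ 2 - 2 * η * ⟪v i, a⟫ + η ^ 2 * ‖v i‖ ^ 2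
        + d * δ ^ 2 / 4)
      = ‖a‖ ^ 2 - 2 * η * ((1 / (n : ℝ)) * ∑ i, ⟪v i, a⟫)
        + η ^ 2 * ((1 / (n : ℝ)) * ∑ i, ‖v i‖ ^ 2) + d * δ ^ 2 / 4 := by
    rw [Finset.sum_add_distrib, Finset.sum_add_distrib, Finset.sum_sub_distrib,
      ← Finset.mul_sum, ← Finset.mul_sum, Finset.sum_const, Finset.sum_const,
      Finset.card_univ, Fintype.card_fin, nsmul_eq_mul, nsmul_eq_mul]
    field_simp
  have hG2 : η ^ 2 * ((1 / (n : ℝ)) * ∑ i, ‖v i‖ ^ 2) ≤ η ^ 2 * G ^ 2 :=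
    mul_le_mul_of_nonneg_left hG (sq_nonneg η)
  calc (1 / (n : ℝ)) * ∑ i, ∑ j : Fin d,
        quantExp δ b ((z - η • v i) j) (fun q => (q - (wstar - wt) j) ^ 2)
      ≤ (1 / (n : ℝ)) * ∑ i, (‖a‖ ^ 2 - 2 * η * ⟪v i, a⟫ + η ^ 2 * ‖v i‖ ^ 2
          + d * δ ^ 2 / 4) := hstep
    _ = ‖a‖ ^ 2 - 2 * η * ((1 / (n : ℝ)) * ∑ i, ⟪v i, a⟫)
        + η ^ 2 * ((1 / (n : ℝ)) * ∑ i, ‖v i‖ ^ 2) + d * δ ^ 2 / 4 := hdistrib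
    _ ≤ ‖a‖ ^ 2 - 2 * η * (F u - F wstar) + η ^ 2 * G ^ 2 + d * δ ^ 2 / 4 := by
        have h1 : 2 * η * (F u - F wstar) ≤ 2 * η * ((1 / (n : ℝ)) * ∑ i, ⟪v i, a⟫) :=
          mul_le_mul_of_nonneg_left hkey (by linarith)
        linarith
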